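/- Let n ≥ 1. Let s, ρ : ℝ → ℝ satisfy, on (0,∞): 0 < s(a) ≤ 1, s antitone, log∘s convex; ρ(a) ≥ 0, ρ antitone and ρ convex. Let p : Fin n → ℝ be a nonincreasing tuple with 0 < p i < 1 for all i, and let α, β : Fin n → ℝ be positive nondecreasing tuples with Σ_{i=1}^k α i ≤ Σ_{i=1}^k β i for every k = 1,…,n. Then Σ_{i=1}^n p i·s(α i)·ρ(α i)/(1 − p i·s(α i)) ≥ Σ_{i=1}^n p i·s(β i)·ρ(β i)/(1 − p i·s(β i)). -/

import Mathlib

open Finset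

/-- Sum of the first `k` entries of the tuple `a`. -/
noncomputable def prefixSum {n : ℕ} (a : Fin n → ℝ) (k : ℕ) : ℝ :=
  ∑ i ∈ Finset.univ.filter (fun i : Fin n => (i : ℕ) < k), a i

/-- Slope comparison for convex functions over shifted intervals. -/
lemma slope_four {S : Set ℝ} {f : ℝ → ℝ} (hf : ConvexOn ℝ S f) {a b c d : ℝ}
    (ha : a ∈ S) (hb : b ∈ S) (hc : c ∈ S) (hd : d ∈ S)
    (hab : a < b) (hcd : c < d) (hac : a ≤ c) (hbd : b ≤ d) :
    (f b - f a) / (b - a) ≤ (f d - f c) / (d - c) := by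
  have had : a < d := hab.trans_le hbd
  have h1 : (f b - f a) / (b - a) ≤ (f d - f a) / (d - a) :=
    hf.secant_mono ha hb hd hab.ne' had.ne' hbd
  have h2 : (f a - f d) / (a - d) ≤ (f c - f d) / (c - d) :=
    hf.secant_mono hd ha hc had.ne hcd.ne hac
  have e1 : (f a - f d) / (a - d) = (f d - f a) / (d - a) := by
    rw [← neg_div_neg_eq, neg_sub, neg_sub]
  have e2 : (f c - f d) / (c - d) = (f d - f c) / (d - c) := by
    rw [← neg_div_neg_eq, neg_sub, neg_sub]
  rw [e1, e2] at h2
  linarith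

set_option maxHeartbeats 2000000 in
/-- Theorem 3.11: largest claim amounts, reversed hazard rate order,
weak supermajorization of the severity parameters. -/
theorem stmt_12 {n : ℕ} (hn : 1 ≤ n) (s ρ : ℝ → ℝ)
    (hs_pos : ∀ a > 0, 0 < s a) (hs_le : ∀ a > 0, s a ≤ 1)
    (hs_anti : AntitoneOn s (Set.Ioi 0))
    (hs_logconv : ConvexOn ℝ (Set.Ioi 0) (fun a => Real.log (s a)))
    (hρ_nonneg : ∀ a > 0, 0 ≤ ρ a)
    (hρ_anti : AntitoneOn ρ (Set.Ioi 0))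
    (hρ_conv : ConvexOn ℝ (Set.Ioi 0) ρ)
    (p α β : Fin n → ℝ)
    (hp : ∀ i, 0 < p i ∧ p i < 1) (hp_anti : Antitone p)
    (hα : ∀ i, 0 < α i) (hβ : ∀ i, 0 < β i)
    (hαm : Monotone α) (hβm : Monotone β)
    (hmaj : ∀ k, 1 ≤ k → k ≤ n → prefixSum α k ≤ prefixSum β k) :
    ∑ i, p i * s (β i) * ρ (β i) / (1 - p i * s (β i)) ≤
      ∑ i, p i * s (α i) * ρ (α i) / (1 - p i * s (α i)) := by
  classical
  -- convexity of s
  have hsc : ConvexOn ℝ (Set.Ioi 0) s := by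
    refine ⟨convex_Ioi 0, fun x hx y hy a b ha hb hab => ?_⟩
    simp only [smul_eq_mul]
    have hmem : a * x + b * y ∈ Set.Ioi (0 : ℝ) := by
      have := (convex_Ioi (0 : ℝ)) hx hy ha hb hab
      simpa [smul_eq_mul] using this
    have h1 : Real.log (s (a * x + b * y)) ≤ a * Real.log (s x) + b * Real.log (s y) := by
      have := hs_logconv.2 hx hy ha hb hab
      simpa [smul_eq_mul] using this
    have h2 : Real.exp (a * Real.log (s x) + b * Real.log (s y)) ≤
        a * Real.exp (Real.log (s x)) + b * Real.exp (Real.log (s y)) := by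
      have := convexOn_exp.2 (Set.mem_univ (Real.log (s x)))
        (Set.mem_univ (Real.log (s y))) ha hb hab
      simpa [smul_eq_mul] using this
    calc s (a * x + b * y) = Real.exp (Real.log (s (a * x + b * y))) :=
          (Real.exp_log (hs_pos _ hmem)).symm
      _ ≤ Real.exp (a * Real.log (s x) + b * Real.log (s y)) := Real.exp_le_exp.2 h1
      _ ≤ a * Real.exp (Real.log (s x)) + b * Real.exp (Real.log (s y)) := h2
      _ = a * s x + b * s y := by rw [Real.exp_log (hs_pos x hx), Real.exp_log (hs_pos y hy)]
  set G : ℝ → ℝ → ℝ := fun q a => q * s a / (1 - q * s a) * ρ a with hGdef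
  -- denominators positive
  have hden : ∀ q a : ℝ, 0 ≤ q → q < 1 → 0 < a → 0 < 1 - q * s a := by
    intro q a hq0 hq1 ha
    have h1 := hs_pos a ha
    have h2 := hs_le a ha
    nlinarith
  -- convexity of G q
  have hGconv : ∀ q : ℝ, 0 < q → q < 1 → ConvexOn ℝ (Set.Ioi 0) (G q) := by
    intro q hq0 hq1
    have hHanti : AntitoneOn (fun a => q * s a / (1 - q * s a)) (Set.Ioi 0) := by
      intro x hx y hy hxy
      have hx0 : (0:ℝ) < x := hx
      have hy0 : (0:ℝ) < y := hy
      have hsyx : s y ≤ s x := hs_anti hx hy hxy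
      have hAx := hden q x hq0.le hq1 hx0
      have hAy := hden q y hq0.le hq1 hy0
      exact div_le_div₀ (mul_nonneg hq0.le (hs_pos x hx0).le)
        (by nlinarith) hAx (by nlinarith)
    have hH : ConvexOn ℝ (Set.Ioi 0) (fun a => q * s a / (1 - q * s a)) := by
      refine ⟨convex_Ioi 0, fun x hx y hy a b ha hb hab => ?_⟩
      simp only [smul_eq_mul]
      have hx0 : (0:ℝ) < x := hx
      have hy0 : (0:ℝ) < y := hy
      have hz : (0:ℝ) < a * x + b * y := by
        have := (convex_Ioi (0 : ℝ)) hx hy ha hb hab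
        simpa [smul_eq_mul] using this
      have hu0 := hs_pos x hx0
      have hv0 := hs_pos y hy0
      have hw0 := hs_pos _ hz
      have hu1 := hs_le x hx0
      have hv1 := hs_le y hy0
      have hw1 := hs_le _ hz
      have hwle : s (a * x + b * y) ≤ a * s x + b * s y := by
        have := hsc.2 hx hy ha hb hab
        simpa [smul_eq_mul] using this
      have hA : 0 < 1 - q * s x := hden q x hq0.le hq1 hx0
      have hB : 0 < 1 - q * s y := hden q y hq0.le hq1 hy0
      have hC : 0 < 1 - q * s (a * x + b * y) := hden q _ hq0.le hq1 hz
      have hABC : a * (1 - q * s x) + b * (1 - q * s y) ≤ 1 - q * s (a * x + b * y) := by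
        nlinarith
      have hABpos : 0 < a * (1 - q * s x) + b * (1 - q * s y) := by nlinarith
      have key : 1 / (1 - q * s (a * x + b * y)) ≤ 1 / (1 - q * s x) * a + 1 / (1 - q * s y) * b := by
        have k1 : 1 / (1 - q * s (a * x + b * y)) ≤
            1 / (a * (1 - q * s x) + b * (1 - q * s y)) :=
          one_div_le_one_div_of_le hABpos hABC
        have k2 : 1 / (a * (1 - q * s x) + b * (1 - q * s y)) ≤
            1 / (1 - q * s x) * a + 1 / (1 - q * s y) * b := by
          rw [one_div_mul_eq_div, one_div_mul_eq_div,
            div_add_div _ _ (ne_of_gt hA) (ne_of_gt hB), div_le_div_iff₀ hABpos (by positivity)]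
          have hid : (a * (1 - q * s y) + (1 - q * s x) * b) * (a * (1 - q * s x) + b * (1 - q * s y))
              = (1 - q * s x) * (1 - q * s y) * (a + b) ^ 2
                + a * b * ((1 - q * s x) - (1 - q * s y)) ^ 2 := by ring
          rw [hid, hab]
          nlinarith [mul_nonneg (mul_nonneg ha hb) (sq_nonneg ((1 - q * s x) - (1 - q * s y)))]
        linarith
      have e : ∀ t : ℝ, 0 < 1 - q * t → q * t / (1 - q * t) = 1 / (1 - q * t) - 1 := by
        intro t ht; field_simp; ring
      rw [e _ hC, e _ hA, e _ hB]
      have expand : a * (1 / (1 - q * s x) - 1) + b * (1 / (1 - q * s y) - 1)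
          = 1 / (1 - q * s x) * a + 1 / (1 - q * s y) * b - (a + b) := by ring
      rw [expand, hab]
      linarith
    have hH0 : ∀ ⦃x⦄, x ∈ Set.Ioi (0:ℝ) → 0 ≤ q * s x / (1 - q * s x) := by
      intro x hx
      have hx0 : (0:ℝ) < x := hx
      exact div_nonneg (mul_nonneg hq0.le (hs_pos x hx0).le) (hden q x hq0.le hq1 hx0).le
    have hρ0 : ∀ ⦃x⦄, x ∈ Set.Ioi (0:ℝ) → 0 ≤ ρ x := fun x hx => hρ_nonneg x hx
    have hmono : MonovaryOn (fun a => q * s a / (1 - q * s a)) ρ (Set.Ioi 0) := by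
      intro x hx y hy hlt
      have hyx : y ≤ x := by
        by_contra h
        push_neg at h
        exact not_lt.2 (hρ_anti hx hy h.le) hlt
      exact hHanti hy hx hyx
    have := hH.mul hρ_conv hH0 hρ0 hmono
    exact this
  -- difference of G's with larger/smaller parameter is antitone
  have hGdiff : ∀ q1 q2 : ℝ, 0 ≤ q2 → q2 ≤ q1 → q1 < 1 →
      ∀ x y : ℝ, 0 < x → x ≤ y → G q1 y - G q2 y ≤ G q1 x - G q2 x := by
    intro q1 q2 hq2 hq12 hq1 x y hx hxy
    have hy : 0 < y := lt_of_lt_of_le hx hxy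
    have hsx1 := hs_le x hx
    have hsy1 := hs_le y hy
    have hsx0 := hs_pos x hx
    have hsy0 := hs_pos y hy
    have hsyx : s y ≤ s x := hs_anti hx hy hxy
    have hρyx : ρ y ≤ ρ x := hρ_anti hx hy hxy
    have hρy0 : 0 ≤ ρ y := hρ_nonneg y hy
    have hρx0 : 0 ≤ ρ x := hρ_nonneg x hx
    have hq10 : 0 ≤ q1 := le_trans hq2 hq12
    have hq21 : q2 < 1 := lt_of_le_of_lt hq12 hq1
    have hA1x := hden q1 x hq10 hq1 hx
    have hA2x := hden q2 x hq2 hq21 hx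
    have hA1y := hden q1 y hq10 hq1 hy
    have hA2y := hden q2 y hq2 hq21 hy
    have iden : ∀ t r : ℝ, 0 < 1 - q1 * t → 0 < 1 - q2 * t →
        q1 * t / (1 - q1 * t) * r - q2 * t / (1 - q2 * t) * r
          = (q1 - q2) * t * r / ((1 - q1 * t) * (1 - q2 * t)) := by
      intro t r h1 h2
      rw [div_mul_eq_mul_div, div_mul_eq_mul_div, div_sub_div _ _ h1.ne' h2.ne']
      congr 1
      ring
    simp only [hGdef]
    rw [iden _ _ hA1y hA2y, iden _ _ hA1x hA2x]
    apply div_le_div₀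
    · have : 0 ≤ q1 - q2 := sub_nonneg.2 hq12
      positivity
    · apply mul_le_mul _ hρyx hρy0 (mul_nonneg (sub_nonneg.2 hq12) hsx0.le)
      exact mul_le_mul_of_nonneg_left hsyx (sub_nonneg.2 hq12)
    · exact mul_pos hA1x hA2x
    · have d1 : 1 - q1 * s x ≤ 1 - q1 * s y := by nlinarith [mul_le_mul_of_nonneg_left hsyx hq10]
      have d2 : 1 - q2 * s x ≤ 1 - q2 * s y := by nlinarith [mul_le_mul_of_nonneg_left hsyx hq2]
      exact mul_le_mul d1 d2 hA2x.le hA1y.le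
  -- antitonicity of G q
  have hGanti : ∀ q : ℝ, 0 ≤ q → q < 1 → ∀ x y : ℝ, 0 < x → x ≤ y → G q y ≤ G q x := by
    intro q hq0 hq1 x y hx hxy
    have := hGdiff q 0 le_rfl hq0 hq1 x y hx hxy
    simpa [hGdef] using this
  -- ℕ-indexed data
  set A : ℕ → ℝ := fun k => if h : k < n then α ⟨k, h⟩ else 0 with hAdef
  set B : ℕ → ℝ := fun k => if h : k < n then β ⟨k, h⟩ else 0 with hBdef
  set P : ℕ → ℝ := fun k => if h : k < n then p ⟨k, h⟩ else 0 with hPdef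
  have hAi : ∀ i : Fin n, A (i : ℕ) = α i := by
    intro i; simp only [hAdef]; rw [dif_pos i.isLt]
  have hBi : ∀ i : Fin n, B (i : ℕ) = β i := by
    intro i; simp only [hBdef]; rw [dif_pos i.isLt]
  have hPi : ∀ i : Fin n, P (i : ℕ) = p i := by
    intro i; simp only [hPdef]; rw [dif_pos i.isLt]
  set SL : ℕ → ℝ := fun k =>
    (G (P k) (max (A k) (B k)) - G (P k) (min (A k) (B k))) /
      (max (A k) (B k) - min (A k) (B k)) with hSLdef
  set Sset : Finset ℕ := (Finset.range n).filter (fun k => A k ≠ B k) with hSsetdef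
  -- reduction of the goal
  have hgoal : (0 ≤ ∑ i : Fin n, (G (p i) (α i) - G (p i) (β i))) →
      ∑ i, p i * s (β i) * ρ (β i) / (1 - p i * s (β i)) ≤
        ∑ i, p i * s (α i) * ρ (α i) / (1 - p i * s (α i)) := by
    intro h
    rw [Finset.sum_sub_distrib] at h
    have e1 : ∀ γ : Fin n → ℝ, ∑ i : Fin n, G (p i) (γ i)
        = ∑ i, p i * s (γ i) * ρ (γ i) / (1 - p i * s (γ i)) := by
      intro γ
      refine Finset.sum_congr rfl fun i _ => ?_
      simp only [hGdef]
      rw [div_mul_eq_mul_div]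
    rw [e1 α, e1 β] at h
    linarith
  apply hgoal
  by_cases hSne : Sset.Nonempty
  · -- main case
    -- facts about members of Sset
    have hmemS : ∀ k ∈ Sset, k < n ∧ A k ≠ B k := by
      intro k hk
      obtain ⟨h1, h2⟩ := Finset.mem_filter.1 hk
      exact ⟨Finset.mem_range.1 h1, h2⟩
    have hApos : ∀ k, k < n → 0 < A k := by
      intro k hk; simp only [hAdef]; rw [dif_pos hk]; exact hα _
    have hBpos : ∀ k, k < n → 0 < B k := by
      intro k hk; simp only [hBdef]; rw [dif_pos hk]; exact hβ _
    have hPmem : ∀ k, k < n → 0 < P k ∧ P k < 1 := by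
      intro k hk; simp only [hPdef]; rw [dif_pos hk]; exact hp _
    -- slope is monotone along Sset
    have hSL_mono : ∀ j1 ∈ Sset, ∀ j2 ∈ Sset, j1 ≤ j2 → SL j1 ≤ SL j2 := by
      intro j1 hj1 j2 hj2 hle
      obtain ⟨h1n, h1ne⟩ := hmemS j1 hj1
      obtain ⟨h2n, h2ne⟩ := hmemS j2 hj2
      have hm1 : 0 < min (A j1) (B j1) := lt_min (hApos _ h1n) (hBpos _ h1n)
      have hm2 : 0 < min (A j2) (B j2) := lt_min (hApos _ h2n) (hBpos _ h2n)
      have hlt1 : min (A j1) (B j1) < max (A j1) (B j1) := min_lt_max.2 h1ne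
      have hlt2 : min (A j2) (B j2) < max (A j2) (B j2) := min_lt_max.2 h2ne
      have hA12 : A j1 ≤ A j2 := by
        simp only [hAdef]; rw [dif_pos h1n, dif_pos h2n]
        exact hαm (Fin.mk_le_mk.2 hle)
      have hB12 : B j1 ≤ B j2 := by
        simp only [hBdef]; rw [dif_pos h1n, dif_pos h2n]
        exact hβm (Fin.mk_le_mk.2 hle)
      have hP12 : P j2 ≤ P j1 := by
        simp only [hPdef]; rw [dif_pos h1n, dif_pos h2n]
        exact hp_anti (Fin.mk_le_mk.2 hle)
      have hmin12 : min (A j1) (B j1) ≤ min (A j2) (B j2) := min_le_min hA12 hB12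
      have hmax12 : max (A j1) (B j1) ≤ max (A j2) (B j2) := max_le_max hA12 hB12
      obtain ⟨hP1pos, hP1lt⟩ := hPmem j1 h1n
      obtain ⟨hP2pos, hP2lt⟩ := hPmem j2 h2n
      have step1 : SL j1 ≤ (G (P j1) (max (A j2) (B j2)) - G (P j1) (min (A j2) (B j2))) /
          (max (A j2) (B j2) - min (A j2) (B j2)) := by
        simp only [hSLdef]
        exact slope_four (hGconv (P j1) hP1pos hP1lt)
          (Set.mem_Ioi.2 hm1) (Set.mem_Ioi.2 (hm1.trans hlt1)) (Set.mem_Ioi.2 hm2)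
          (Set.mem_Ioi.2 (hm2.trans hlt2)) hlt1 hlt2 hmin12 hmax12
      have step2 : (G (P j1) (max (A j2) (B j2)) - G (P j1) (min (A j2) (B j2))) /
          (max (A j2) (B j2) - min (A j2) (B j2)) ≤ SL j2 := by
        simp only [hSLdef]
        rw [div_le_div_iff_of_pos_right (sub_pos.2 hlt2)]
        have := hGdiff (P j1) (P j2) hP2pos.le hP12 hP1lt
          (min (A j2) (B j2)) (max (A j2) (B j2)) hm2 hlt2.le
        linarith
      linarith
    -- slopes are nonpositive
    have hSL_nonpos : ∀ k ∈ Sset, SL k ≤ 0 := by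
      intro k hk
      obtain ⟨hkn, hkne⟩ := hmemS k hk
      have hm : 0 < min (A k) (B k) := lt_min (hApos _ hkn) (hBpos _ hkn)
      have hlt : min (A k) (B k) < max (A k) (B k) := min_lt_max.2 hkne
      obtain ⟨hPpos, hPlt⟩ := hPmem k hkn
      have hnum : G (P k) (max (A k) (B k)) - G (P k) (min (A k) (B k)) ≤ 0 :=
        sub_nonpos.2 (hGanti (P k) hPpos.le hPlt _ _ hm hlt.le)
      exact div_nonpos_of_nonpos_of_nonneg hnum (sub_nonneg.2 hlt.le)
    -- the carried-forward slope sequence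
    set jj : ℕ → ℕ := fun k =>
      if h : (Sset.filter (fun j => j ≤ k)).Nonempty then (Sset.filter (fun j => j ≤ k)).max' h
      else Sset.min' hSne with hjjdef
    set d : ℕ → ℝ := fun k => SL (jj k) with hddef
    have hjj_mem : ∀ k, jj k ∈ Sset := by
      intro k
      simp only [hjjdef]
      split_ifs with h
      · exact Finset.mem_of_mem_filter _ ((Sset.filter (fun j => j ≤ k)).max'_mem h)
      · exact Sset.min'_mem hSne
    have hjj_self : ∀ k ∈ Sset, jj k = k := by
      intro k hk
      have hne : (Sset.filter (fun j => j ≤ k)).Nonempty :=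
        ⟨k, Finset.mem_filter.2 ⟨hk, le_rfl⟩⟩
      simp only [hjjdef]
      rw [dif_pos hne]
      have hkmem : k ∈ Sset.filter (fun j => j ≤ k) := Finset.mem_filter.2 ⟨hk, le_rfl⟩
      exact le_antisymm (Finset.max'_le _ _ _ fun x hx => (Finset.mem_filter.1 hx).2)
        (Finset.le_max' _ k hkmem)
    have hjj_le : ∀ k, jj k ≤ max k (Sset.min' hSne) := by
      intro k
      simp only [hjjdef]
      split_ifs with h
      · exact le_trans (Finset.mem_filter.1 ((Sset.filter (fun j => j ≤ k)).max'_mem h)).2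
          (le_max_left _ _)
      · exact le_max_right _ _
    have hd_mono : Monotone d := by
      apply monotone_nat_of_le_succ
      intro k
      by_cases hk1 : (k + 1) ∈ Sset
      · have h1 : jj (k + 1) = k + 1 := hjj_self _ hk1
        have h2 : jj k ≤ k + 1 := by
          have h3 := hjj_le k
          have h4 : Sset.min' hSne ≤ k + 1 := Sset.min'_le _ hk1
          omega
        simp only [hddef]
        rw [h1]
        exact hSL_mono _ (hjj_mem k) _ hk1 h2
      · have heq : Sset.filter (fun j => j ≤ k + 1) = Sset.filter (fun j => j ≤ k) := by
          ext x
          simp only [Finset.mem_filter, and_congr_right_iff]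
          intro hx
          constructor
          · intro h
            have : x ≠ k + 1 := fun e => hk1 (e ▸ hx)
            omega
          · omega
        simp only [hddef, hjjdef, heq]
        exact le_rfl
    have hd_nonpos : ∀ k, d k ≤ 0 := fun k => hSL_nonpos _ (hjj_mem k)
    -- per-term identity
    have hterm : ∀ i : Fin n, G (p i) (α i) - G (p i) (β i) = d (i : ℕ) * (α i - β i) := by
      intro i
      by_cases hne : α i = β i
      · rw [hne]; simp
      · have hiS : (i : ℕ) ∈ Sset := by
          refine Finset.mem_filter.2 ⟨Finset.mem_range.2 i.isLt, ?_⟩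
          rw [hAi i, hBi i]; exact hne
        have hdi : d (i : ℕ) = SL (i : ℕ) := by
          simp only [hddef]; rw [hjj_self _ hiS]
        rw [hdi]
        simp only [hSLdef]
        rw [hAi i, hBi i, hPi i]
        rcases lt_or_gt_of_ne hne with h | h
        · rw [min_eq_left h.le, max_eq_right h.le]
          rw [div_mul_eq_mul_div, eq_div_iff (sub_ne_zero.2 h.ne')]
          try ring
        · rw [min_eq_right h.le, max_eq_left h.le]
          rw [div_mul_eq_mul_div, eq_div_iff (sub_ne_zero.2 h.ne')]
          try ring
    -- prefix sums
    have hsum : ∀ (γ : Fin n → ℝ) (C : ℕ → ℝ), (∀ i : Fin n, C (i : ℕ) = γ i) →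
        ∀ k, k ≤ n → prefixSum γ k = ∑ j ∈ Finset.range k, C j := by
      intro γ C hC k hk
      unfold prefixSum
      rw [Finset.sum_filter]
      have e1 : ∀ i : Fin n, (if (i : ℕ) < k then γ i else 0)
          = (fun j => if j < k then C j else 0) (i : ℕ) := by
        intro i
        simp only []
        by_cases h : (i : ℕ) < k
        · rw [if_pos h, if_pos h, hC i]
        · rw [if_neg h, if_neg h]
      rw [Finset.sum_congr rfl fun i _ => e1 i,
        Fin.sum_univ_eq_sum_range (fun j => if j < k then C j else 0) n]
      rw [← Finset.sum_filter]
      congr 1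
      ext x
      simp only [Finset.mem_filter, Finset.mem_range]
      omega
    set δ : ℕ → ℝ := fun k => B k - A k with hδdef
    have hD : ∀ k, k ≤ n → 0 ≤ ∑ j ∈ Finset.range k, δ j := by
      intro k hk
      rcases Nat.eq_zero_or_pos k with rfl | hk1
      · simp
      · have h1 := hmaj k hk1 hk
        rw [hsum α A hAi k hk, hsum β B hBi k hk] at h1
        simp only [hδdef]
        rw [Finset.sum_sub_distrib]
        linarith
    -- Abel summation
    have habel := Finset.sum_range_by_parts d δ n
    have hle0 : ∑ j ∈ Finset.range n, d j * δ j ≤ 0 := by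
      have e : ∑ j ∈ Finset.range n, d j * δ j = ∑ j ∈ Finset.range n, d j • δ j := by
        simp [smul_eq_mul]
      rw [e, habel]
      have t1 : d (n - 1) • (∑ i ∈ Finset.range n, δ i) ≤ 0 := by
        rw [smul_eq_mul]
        exact mul_nonpos_of_nonpos_of_nonneg (hd_nonpos (n - 1)) (hD n le_rfl)
      have t2 : 0 ≤ ∑ i ∈ Finset.range (n - 1), (d (i + 1) - d i) • (∑ j ∈ Finset.range (i + 1), δ j) := by
        apply Finset.sum_nonneg
        intro i hi
        rw [smul_eq_mul]
        apply mul_nonneg (sub_nonneg.2 (hd_mono (Nat.le_succ i)))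
        apply hD
        have := Finset.mem_range.1 hi
        omega
      linarith
    -- final computation
    have key : ∑ i : Fin n, (G (p i) (α i) - G (p i) (β i))
        = - ∑ j ∈ Finset.range n, d j * δ j := by
      have c1 : ∑ i : Fin n, (G (p i) (α i) - G (p i) (β i))
          = ∑ i : Fin n, (fun j => - (d j * δ j)) (i : ℕ) := by
        refine Finset.sum_congr rfl fun i _ => ?_
        rw [hterm i]
        simp only [hδdef]
        rw [hAi i, hBi i]
        ring
      rw [c1, Fin.sum_univ_eq_sum_range (fun j => - (d j * δ j)) n, Finset.sum_neg_distrib]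
    rw [key]
    linarith
  · -- degenerate case : α = β
    have hall : ∀ i : Fin n, α i = β i := by
      intro i
      by_contra hne
      apply hSne
      refine ⟨(i : ℕ), Finset.mem_filter.2 ⟨Finset.mem_range.2 i.isLt, ?_⟩⟩
      rw [hAi i, hBi i]
      exact hne
    have : ∑ i : Fin n, (G (p i) (α i) - G (p i) (β i)) = 0 := by
      apply Finset.sum_eq_zero
      intro i _
      rw [hall i, sub_self]
    rw [this]
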